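/- For σ, ρ ∈ S_n, the χ-twist (dual twisted by the anti-automorphism χ with χ(π_i) = π_i) of B(σ,ρ) is isomorphic as an H_n(0)-module to B̄(ρw_0, σw_0), via the map sending the dual basis vector γ* to γw_0. -/

import Mathlib

open scoped Classical

noncomputable section

/-- The symmetric group `S_{n+1}` (the paper's `S_n` with `n = n+1`). -/
abbrev SG (n : ℕ) := Equiv.Perm (Fin (n + 1))

/-- The simple transposition `s_{i+1}` (adjacent transposition swapping `i` and `i+1`,
0-indexed). -/
def sgen {n : ℕ} (i : Fin n) : SG n := Equiv.swap i.castSucc i.succ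

/-- Coxeter length of a permutation, i.e. its number of inversions. -/
def len {n : ℕ} (σ : SG n) : ℕ :=
  (Finset.univ.filter fun p : Fin (n + 1) × Fin (n + 1) => p.1 < p.2 ∧ σ p.2 < σ p.1).card

/-- The left weak Bruhat order on `S_{n+1}`. -/
def leL {n : ℕ} (σ ρ : SG n) : Prop := ∃ γ, ρ = γ * σ ∧ len ρ = len σ + len γ

/-- Left descent set. -/
def DesL {n : ℕ} (σ : SG n) : Set (Fin n) := {i | len (sgen i * σ) < len σ}

/-- Right descent set. -/
def DesR {n : ℕ} (σ : SG n) : Set (Fin n) := {i | len (σ * sgen i) < len σ}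

/-- The longest element `w₀` of `S_{n+1}`. -/
def w0 {n : ℕ} : SG n := ⟨Fin.rev, Fin.rev, Fin.rev_rev, Fin.rev_rev⟩

lemma len_one {n : ℕ} : len (1 : SG n) = 0 := by
  unfold len
  rw [Finset.card_eq_zero, Finset.eq_empty_iff_forall_notMem]
  rintro p hp
  rw [Finset.mem_filter] at hp
  obtain ⟨-, h1, h2⟩ := hp
  simp only [Equiv.Perm.one_apply] at h2
  exact absurd (h1.trans h2) (lt_irrefl _)

lemma leL_refl {n : ℕ} (σ : SG n) : leL σ σ :=
  ⟨1, (one_mul σ).symm, by simp [len_one]⟩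

/-- The defining relations of the 0-Hecke algebra `H_{n+1}(0)`. -/
inductive HRel (n : ℕ) : FreeAlgebra ℂ (Fin n) → FreeAlgebra ℂ (Fin n) → Prop
  | idem (i : Fin n) :
      HRel n (FreeAlgebra.ι ℂ i * FreeAlgebra.ι ℂ i) (FreeAlgebra.ι ℂ i)
  | braid (i j : Fin n) (h : (i : ℕ) + 1 = j) :
      HRel n (FreeAlgebra.ι ℂ i * FreeAlgebra.ι ℂ j * FreeAlgebra.ι ℂ i)
             (FreeAlgebra.ι ℂ j * FreeAlgebra.ι ℂ i * FreeAlgebra.ι ℂ j)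
  | comm (i j : Fin n) (h : (i : ℕ) + 2 ≤ j) :
      HRel n (FreeAlgebra.ι ℂ i * FreeAlgebra.ι ℂ j) (FreeAlgebra.ι ℂ j * FreeAlgebra.ι ℂ i)

/-- The 0-Hecke algebra `H_{n+1}(0)` over `ℂ`. -/
abbrev Hecke (n : ℕ) := RingQuot (HRel n)

/-- The generator `π_{i+1}` of the 0-Hecke algebra. -/
def hpi {n : ℕ} (i : Fin n) : Hecke n :=
  RingQuot.mkAlgHom ℂ (HRel n) (FreeAlgebra.ι ℂ i)

/-- The element `π̄_{i+1} = π_{i+1} - 1`. -/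
def hpibar {n : ℕ} (i : Fin n) : Hecke n := hpi i - 1

/-- `l` is a reduced word for `σ`. -/
def IsReducedWord {n : ℕ} (l : List (Fin n)) (σ : SG n) : Prop :=
  (l.map sgen).prod = σ ∧ l.length = len σ

/-- `π_σ`, the product of the generators `π_i` along a reduced word for `σ`. -/
noncomputable def piPerm {n : ℕ} (σ : SG n) : Hecke n :=
  if h : ∃ l : List (Fin n), IsReducedWord l σ then ((h.choose.map hpi).prod) else 0

/-- `π̄_σ`, the product of the elements `π̄_i` along a reduced word for `σ`. -/
noncomputable def pibarPerm {n : ℕ} (σ : SG n) : Hecke n :=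
  if h : ∃ l : List (Fin n), IsReducedWord l σ then ((h.choose.map hpibar).prod) else 0

/-- The left weak Bruhat interval `[σ,ρ]_L`. -/
abbrev Itv {n : ℕ} (σ ρ : SG n) := {γ : SG n // leL σ γ ∧ leL γ ρ}

/-- The action of the generator `π_{i+1}` on a basis element of `ℂ[σ,ρ]_L`. -/
noncomputable def bpiFun {n : ℕ} (σ ρ : SG n) (i : Fin n) (γ : Itv σ ρ) :
    Itv σ ρ →₀ ℂ :=
  if i ∈ DesL γ.1 then Finsupp.single γ 1
  else if h : leL σ (sgen i * γ.1) ∧ leL (sgen i * γ.1) ρ then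
    Finsupp.single ⟨sgen i * γ.1, h⟩ 1
  else 0

/-- The operator `𝛑_i` on `ℂ[σ,ρ]_L` (the action of `π_{i+1}` on `B(σ,ρ)`). -/
noncomputable def bpi {n : ℕ} (σ ρ : SG n) (i : Fin n) :
    (Itv σ ρ →₀ ℂ) →ₗ[ℂ] (Itv σ ρ →₀ ℂ) :=
  Finsupp.lift _ ℂ _ (bpiFun σ ρ i)

/-- The action of `π̄_{i+1}` on a basis element of the module `B̄(σ,ρ)`. -/
noncomputable def bbarFun {n : ℕ} (σ ρ : SG n) (i : Fin n) (γ : Itv σ ρ) :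
    Itv σ ρ →₀ ℂ :=
  if i ∈ DesL γ.1 then -Finsupp.single γ 1
  else if h : leL σ (sgen i * γ.1) ∧ leL (sgen i * γ.1) ρ then
    Finsupp.single ⟨sgen i * γ.1, h⟩ 1
  else 0

/-- The operator giving the action of `π̄_{i+1}` on `B̄(σ,ρ)`. -/
noncomputable def bbar {n : ℕ} (σ ρ : SG n) (i : Fin n) :
    (Itv σ ρ →₀ ℂ) →ₗ[ℂ] (Itv σ ρ →₀ ℂ) :=
  Finsupp.lift _ ℂ _ (bbarFun σ ρ i)

/-- The underlying map of the `χ`-twist isomorphism, sending the dual basis element `γ*` of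
`B(σ,ρ)*` to the basis element `γ w₀` of `B̄(ρw₀, σw₀)`. -/
noncomputable def chiF {n : ℕ} (σ ρ : SG n) :
    Module.Dual ℂ (Itv σ ρ →₀ ℂ) →ₗ[ℂ] (Itv (ρ * w0) (σ * w0) →₀ ℂ) where
  toFun δ := ∑ γ : Itv σ ρ, δ (Finsupp.single γ 1) •
    (if h : leL (ρ * w0) (γ.1 * w0) ∧ leL (γ.1 * w0) (σ * w0) then
      Finsupp.single (⟨γ.1 * w0, h⟩ : Itv (ρ * w0) (σ * w0)) (1 : ℂ)
    else 0)
  map_add' a b := by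
    rw [← Finset.sum_add_distrib]
    refine Finset.sum_congr rfl fun γ _ => ?_
    simp only [LinearMap.add_apply, add_smul]
  map_smul' c a := by
    rw [RingHom.id_apply, Finset.smul_sum]
    refine Finset.sum_congr rfl fun γ _ => ?_
    simp only [LinearMap.smul_apply, smul_smul, smul_eq_mul]

-- ### new material

lemma sgen_lt_iff {n : ℕ} (i : Fin n) (a b : Fin (n+1))
    (h1 : ¬(a = i.castSucc ∧ b = i.succ)) (h2 : ¬(a = i.succ ∧ b = i.castSucc)) :
    sgen i a < sgen i b ↔ a < b := by
  simp only [sgen, Equiv.swap_apply_def]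
  split_ifs <;>
    (simp only [Fin.lt_def, Fin.ext_iff, Fin.val_succ, Fin.coe_castSucc, not_and] at *) <;> omega

lemma sgen_mul_sgen_mul {n : ℕ} (i : Fin n) (γ : SG n) : sgen i * (sgen i * γ) = γ := by
  rw [← mul_assoc, sgen, Equiv.swap_mul_self, one_mul]

lemma len_sgen_or {n : ℕ} (i : Fin n) (γ : SG n) :
    len (sgen i * γ) = len γ + 1 ∨ len γ = len (sgen i * γ) + 1 := by
  classical
  set u := γ⁻¹ i.castSucc with hu
  set v := γ⁻¹ i.succ with hv
  have hγu : γ u = i.castSucc := by simp [hu]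
  have hγv : γ v = i.succ := by simp [hv]
  have hcs : i.castSucc ≠ i.succ := by
    simp [Fin.ext_iff]
  have huv : u ≠ v := by
    intro h
    exact hcs (by rw [← hγu, ← hγv, h])
  set p0 : Fin (n+1) × Fin (n+1) := if u < v then (u, v) else (v, u) with hp0
  have hp0lt : p0.1 < p0.2 := by
    rcases lt_or_gt_of_ne huv with h | h
    · simp [hp0, h]
    · simp [hp0, not_lt_of_gt h, h]
  set S := Finset.univ.filter fun p : Fin (n+1) × Fin (n+1) => p.1 < p.2 ∧ γ p.2 < γ p.1 with hS
  set S' := Finset.univ.filter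
    (fun p : Fin (n+1) × Fin (n+1) => p.1 < p.2 ∧ (sgen i * γ) p.2 < (sgen i * γ) p.1) with hS'
  have hlen : len γ = S.card := rfl
  have hlen' : len (sgen i * γ) = S'.card := rfl
  have key1 : ∀ p, p ≠ p0 → (p ∈ S' ↔ p ∈ S) := by
    intro p hp
    rw [hS', hS, Finset.mem_filter, Finset.mem_filter]
    simp only [Finset.mem_univ, true_and, Equiv.Perm.mul_apply]
    constructor
    · rintro ⟨h12, hinv⟩
      refine ⟨h12, ?_⟩
      rw [← sgen_lt_iff i (γ p.2) (γ p.1) ?_ ?_]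
      · exact hinv
      · rintro ⟨ha, hb⟩
        apply hp
        have hpu : p.2 = u := by rw [hu, ← ha, Equiv.Perm.inv_def, Equiv.symm_apply_apply]
        have hpv : p.1 = v := by rw [hv, ← hb, Equiv.Perm.inv_def, Equiv.symm_apply_apply]
        have : v < u := by rw [← hpu, ← hpv]; exact h12
        rw [hp0, if_neg (not_lt_of_gt this)]
        exact Prod.ext hpv hpu
      · rintro ⟨ha, hb⟩
        apply hp
        have hpu : p.1 = u := by rw [hu, ← hb, Equiv.Perm.inv_def, Equiv.symm_apply_apply]
        have hpv : p.2 = v := by rw [hv, ← ha, Equiv.Perm.inv_def, Equiv.symm_apply_apply]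
        have : u < v := by rw [← hpu, ← hpv]; exact h12
        rw [hp0, if_pos this]
        exact Prod.ext hpu hpv
    · rintro ⟨h12, hinv⟩
      refine ⟨h12, ?_⟩
      rw [sgen_lt_iff i (γ p.2) (γ p.1) ?_ ?_]
      · exact hinv
      · rintro ⟨ha, hb⟩
        apply hp
        have hpu : p.2 = u := by rw [hu, ← ha, Equiv.Perm.inv_def, Equiv.symm_apply_apply]
        have hpv : p.1 = v := by rw [hv, ← hb, Equiv.Perm.inv_def, Equiv.symm_apply_apply]
        have : v < u := by rw [← hpu, ← hpv]; exact h12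
        rw [hp0, if_neg (not_lt_of_gt this)]
        exact Prod.ext hpv hpu
      · rintro ⟨ha, hb⟩
        apply hp
        have hpu : p.1 = u := by rw [hu, ← hb, Equiv.Perm.inv_def, Equiv.symm_apply_apply]
        have hpv : p.2 = v := by rw [hv, ← ha, Equiv.Perm.inv_def, Equiv.symm_apply_apply]
        have : u < v := by rw [← hpu, ← hpv]; exact h12
        rw [hp0, if_pos this]
        exact Prod.ext hpu hpv
  have key2 : p0 ∈ S' ↔ p0 ∉ S := by
    have hγ01 : (γ p0.1 = i.castSucc ∧ γ p0.2 = i.succ) ∨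
        (γ p0.1 = i.succ ∧ γ p0.2 = i.castSucc) := by
      by_cases h : u < v
      · left; rw [hp0]; simp [h, hγu, hγv]
      · right; rw [hp0]; simp [h, hγu, hγv]
    have hswl : sgen i i.castSucc = i.succ := Equiv.swap_apply_left _ _
    have hswr : sgen i i.succ = i.castSucc := Equiv.swap_apply_right _ _
    have hlt : i.castSucc < i.succ := Fin.castSucc_lt_succ
    rw [hS', hS, Finset.mem_filter, Finset.mem_filter]
    simp only [Finset.mem_univ, true_and, Equiv.Perm.mul_apply,
      hp0lt, true_and, not_and, not_lt]
    rcases hγ01 with ⟨h1, h2⟩ | ⟨h1, h2⟩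
    · rw [h1, h2, hswl, hswr]
      simp [hlt, le_of_lt hlt]
    · rw [h1, h2, hswl, hswr]
      simp [hlt, le_of_lt hlt, not_lt_of_gt hlt]
  by_cases hmem : p0 ∈ S
  · right
    have h' : p0 ∉ S' := fun hc => (key2.mp hc) hmem
    have : S' = S.erase p0 := by
      ext p
      by_cases hp : p = p0
      · subst hp; simp [h', Finset.mem_erase]
      · rw [Finset.mem_erase, key1 p hp]
        exact ⟨fun h => ⟨hp, h⟩, fun h => h.2⟩
    rw [hlen, hlen', this, Finset.card_erase_of_mem hmem]
    have : S.card ≠ 0 := Finset.card_ne_zero_of_mem hmem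
    omega
  · left
    have h' : p0 ∈ S' := key2.mpr hmem
    have : S = S'.erase p0 := by
      ext p
      by_cases hp : p = p0
      · subst hp; simp [hmem, Finset.mem_erase]
      · rw [Finset.mem_erase, key1 p hp]
        exact ⟨fun h => ⟨hp, h⟩, fun h => h.2⟩
    rw [hlen, hlen', this, Finset.card_erase_of_mem h']
    have : S'.card ≠ 0 := Finset.card_ne_zero_of_mem h'
    omega

lemma len_sgen_ne {n : ℕ} (i : Fin n) (γ : SG n) : len (sgen i * γ) ≠ len γ := by
  rcases len_sgen_or i γ with h | h <;> omega

lemma len_inv {n : ℕ} (δ : SG n) : len δ⁻¹ = len δ := by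
  unfold len
  apply Finset.card_nbij' (i := fun p : Fin (n+1) × Fin (n+1) => (δ⁻¹ p.2, δ⁻¹ p.1))
    (j := fun p : Fin (n+1) × Fin (n+1) => (δ p.2, δ p.1))
  · rintro p hp
    rw [Finset.mem_coe, Finset.mem_filter] at hp ⊢
    simp only [Finset.mem_univ, true_and,
      Equiv.Perm.coe_inv, Equiv.apply_symm_apply] at hp ⊢
    exact ⟨hp.2, hp.1⟩
  · rintro p hp
    rw [Finset.mem_coe, Finset.mem_filter] at hp ⊢
    simp only [Finset.mem_univ, true_and,
      Equiv.Perm.coe_inv, Equiv.symm_apply_apply] at hp ⊢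
    exact ⟨hp.2, hp.1⟩
  · rintro p hp
    simp [Equiv.Perm.coe_inv, Equiv.apply_symm_apply]
  · rintro p hp
    simp [Equiv.Perm.coe_inv, Equiv.symm_apply_apply]

def TT (n : ℕ) : ℕ :=
  (Finset.univ.filter fun p : Fin (n + 1) × Fin (n + 1) => p.1 < p.2).card

lemma w0_apply {n : ℕ} (p : Fin (n+1)) : (w0 : SG n) p = p.rev := rfl

lemma w0_mul_w0 {n : ℕ} : (w0 : SG n) * w0 = 1 := by
  ext p
  simp [Equiv.Perm.mul_apply, w0_apply, Fin.rev_rev]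

lemma mul_w0_w0 {n : ℕ} (γ : SG n) : γ * w0 * w0 = γ := by
  rw [mul_assoc, w0_mul_w0, mul_one]

lemma len_mul_w0 {n : ℕ} (φ : SG n) : len (φ * w0) + len φ = TT n := by
  have h1 : len (φ * w0) = (Finset.univ.filter
      fun p : Fin (n+1) × Fin (n+1) => p.1 < p.2 ∧ φ p.1 < φ p.2).card := by
    unfold len
    apply Finset.card_nbij' (i := fun p : Fin (n+1) × Fin (n+1) => (Fin.rev p.2, Fin.rev p.1))
      (j := fun p : Fin (n+1) × Fin (n+1) => (Fin.rev p.2, Fin.rev p.1))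
    · rintro p hp
      rw [Finset.mem_coe, Finset.mem_filter] at hp ⊢
      simp only [Finset.mem_univ, true_and, Equiv.Perm.mul_apply,
        w0_apply] at hp ⊢
      exact ⟨Fin.rev_lt_rev.mpr hp.1, hp.2⟩
    · rintro p hp
      rw [Finset.mem_coe, Finset.mem_filter] at hp ⊢
      simp only [Finset.mem_univ, true_and, Equiv.Perm.mul_apply,
        w0_apply, Fin.rev_rev] at hp ⊢
      exact ⟨Fin.rev_lt_rev.mpr hp.1, hp.2⟩
    · rintro p hp; simp [Fin.rev_rev]
    · rintro p hp; simp [Fin.rev_rev]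
  have h2 := Finset.card_filter_add_card_filter_not
    (s := Finset.univ.filter fun p : Fin (n+1) × Fin (n+1) => p.1 < p.2)
    (p := fun p => φ p.1 < φ p.2)
  rw [Finset.filter_filter, Finset.filter_filter] at h2
  have h3 : (Finset.univ.filter fun p : Fin (n+1) × Fin (n+1) => p.1 < p.2 ∧ ¬ φ p.1 < φ p.2)
      = Finset.univ.filter fun p : Fin (n+1) × Fin (n+1) => p.1 < p.2 ∧ φ p.2 < φ p.1 := by
    apply Finset.filter_congr
    intro p _
    constructor
    · rintro ⟨hlt, hn⟩
      refine ⟨hlt, lt_of_le_of_ne (not_lt.mp hn) ?_⟩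
      intro h
      exact absurd (φ.injective h) (ne_of_gt hlt)
    · rintro ⟨hlt, hgt⟩
      exact ⟨hlt, not_lt_of_gt hgt⟩
  rw [h3] at h2
  rw [h1]
  unfold len TT
  omega

lemma leL_w0 {n : ℕ} {σ γ : SG n} (h : leL σ γ) : leL (γ * w0) (σ * w0) := by
  obtain ⟨δ, hδ, hlen⟩ := h
  refine ⟨δ⁻¹, ?_, ?_⟩
  · rw [hδ, ← mul_assoc, ← mul_assoc, inv_mul_cancel, one_mul]
  · have e1 := len_mul_w0 σ
    have e2 := len_mul_w0 γ
    rw [len_inv]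
    omega

lemma leL_w0_iff {n : ℕ} {σ γ : SG n} : leL σ γ ↔ leL (γ * w0) (σ * w0) := by
  constructor
  · exact leL_w0
  · intro h
    have := leL_w0 h
    rwa [mul_w0_w0, mul_w0_w0] at this

lemma itv_w0_iff {n : ℕ} {σ ρ γ : SG n} :
    (leL σ γ ∧ leL γ ρ) ↔ (leL (ρ * w0) (γ * w0) ∧ leL (γ * w0) (σ * w0)) :=
  ⟨fun h => ⟨leL_w0 h.2, leL_w0 h.1⟩, fun h => ⟨leL_w0_iff.mpr h.2, leL_w0_iff.mpr h.1⟩⟩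

lemma desL_w0 {n : ℕ} {γ : SG n} {i : Fin n} : i ∈ DesL (γ * w0) ↔ i ∉ DesL γ := by
  simp only [DesL, Set.mem_setOf_eq, not_lt]
  have e1 := len_mul_w0 γ
  have e2 := len_mul_w0 (sgen i * γ)
  rw [show sgen i * γ * w0 = sgen i * (γ * w0) from mul_assoc _ _ _] at e2
  have e3 := len_sgen_ne i γ
  omega

lemma desL_sgen {n : ℕ} {γ : SG n} {i : Fin n} : i ∈ DesL (sgen i * γ) ↔ i ∉ DesL γ := by
  simp only [DesL, Set.mem_setOf_eq, not_lt]
  have e1 : sgen i * (sgen i * γ) = γ := sgen_mul_sgen_mul i γ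
  rw [e1]
  have e3 := len_sgen_ne i γ
  omega

-- ### module level

def mEquiv {n : ℕ} (σ ρ : SG n) : Itv σ ρ ≃ Itv (ρ * w0) (σ * w0) where
  toFun γ := ⟨γ.1 * w0, itv_w0_iff.mp γ.2⟩
  invFun γ := ⟨γ.1 * w0, by
    have h := itv_w0_iff.mp γ.2
    rwa [mul_w0_w0, mul_w0_w0] at h⟩
  left_inv γ := Subtype.ext (mul_w0_w0 γ.1)
  right_inv γ := Subtype.ext (mul_w0_w0 γ.1)

lemma chiF_apply {n : ℕ} (σ ρ : SG n) (δ : Module.Dual ℂ (Itv σ ρ →₀ ℂ)) :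
    chiF σ ρ δ = ∑ γ : Itv σ ρ,
      δ (Finsupp.single γ 1) • Finsupp.single (mEquiv σ ρ γ) (1 : ℂ) := by
  show (∑ γ : Itv σ ρ, δ (Finsupp.single γ 1) • _) = _
  refine Finset.sum_congr rfl fun γ _ => ?_
  rw [dif_pos (itv_w0_iff.mp γ.2)]
  rfl

lemma bpi_single {n : ℕ} (σ ρ : SG n) (i : Fin n) (γ : Itv σ ρ) :
    bpi σ ρ i (Finsupp.single γ 1) = bpiFun σ ρ i γ := by
  rw [bpi, Finsupp.lift_apply, Finsupp.sum_single_index (by rw [zero_smul]), one_smul]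

lemma bbar_single {n : ℕ} (σ ρ : SG n) (i : Fin n) (γ : Itv σ ρ) :
    bbar σ ρ i (Finsupp.single γ 1) = bbarFun σ ρ i γ := by
  rw [bbar, Finsupp.lift_apply, Finsupp.sum_single_index (by rw [zero_smul]), one_smul]

lemma sum_single_univ {α : Type*} [Fintype α] (w : α →₀ ℂ) :
    ∑ a : α, Finsupp.single a (w a) = w := by
  conv_rhs => rw [← Finsupp.sum_single w]
  rw [Finsupp.sum]
  exact (Finset.sum_subset (Finset.subset_univ _) (fun x _ hx => by
    rw [Finsupp.notMem_support_iff.mp hx, Finsupp.single_zero])).symm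

lemma chiF_apply_point {n : ℕ} (σ ρ : SG n) (δ : Module.Dual ℂ (Itv σ ρ →₀ ℂ))
    (γ' : Itv (ρ * w0) (σ * w0)) :
    chiF σ ρ δ γ' = δ (Finsupp.single ((mEquiv σ ρ).symm γ') 1) := by
  rw [chiF_apply, Finset.sum_apply']
  have : ∀ γ : Itv σ ρ,
      (δ (Finsupp.single γ 1) • Finsupp.single (mEquiv σ ρ γ) (1 : ℂ)) γ'
        = if γ = (mEquiv σ ρ).symm γ' then δ (Finsupp.single γ 1) else 0 := by
    intro γ
    rw [Finsupp.smul_apply, Finsupp.single_apply]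
    by_cases h : mEquiv σ ρ γ = γ'
    · rw [if_pos h, if_pos (by rw [← h, Equiv.symm_apply_apply]), smul_eq_mul, mul_one]
    · rw [if_neg h, if_neg (fun hc => h (by rw [hc, Equiv.apply_symm_apply])), smul_zero]
  rw [Finset.sum_congr rfl fun γ _ => this γ, Finset.sum_ite_eq' Finset.univ]
  simp

lemma chiF_bijective {n : ℕ} (σ ρ : SG n) : Function.Bijective (chiF σ ρ) := by
  rw [Function.bijective_iff_has_inverse]
  refine ⟨fun w => ∑ γ' : Itv (ρ * w0) (σ * w0), w γ' •
      (Finsupp.lapply ((mEquiv σ ρ).symm γ') : (Itv σ ρ →₀ ℂ) →ₗ[ℂ] ℂ), ?_, ?_⟩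
  · intro δ
    apply Finsupp.lhom_ext
    intro a b
    rw [LinearMap.sum_apply]
    have : ∀ γ' : Itv (ρ * w0) (σ * w0),
        (chiF σ ρ δ γ' • (Finsupp.lapply ((mEquiv σ ρ).symm γ') :
          (Itv σ ρ →₀ ℂ) →ₗ[ℂ] ℂ)) (Finsupp.single a b)
        = if γ' = mEquiv σ ρ a then b * δ (Finsupp.single a 1) else 0 := by
      intro γ'
      rw [LinearMap.smul_apply, Finsupp.lapply_apply, Finsupp.single_apply, chiF_apply_point]
      by_cases h : γ' = mEquiv σ ρ a
      · rw [if_pos h, if_pos (by rw [h, Equiv.symm_apply_apply]), h, Equiv.symm_apply_apply,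
          smul_eq_mul, mul_comm]
      · rw [if_neg h, if_neg (fun hc => h (by rw [hc, Equiv.apply_symm_apply])), smul_zero]
    rw [Finset.sum_congr rfl fun γ' _ => this γ', Finset.sum_ite_eq' Finset.univ]
    have hs : Finsupp.single a b = b • Finsupp.single a (1 : ℂ) := by
      rw [Finsupp.smul_single', mul_one]
    rw [if_pos (Finset.mem_univ _), hs, map_smul, smul_eq_mul]
  · intro w
    rw [chiF_apply]
    have : ∀ γ : Itv σ ρ,
        ((∑ γ' : Itv (ρ * w0) (σ * w0), w γ' •
          (Finsupp.lapply ((mEquiv σ ρ).symm γ') : (Itv σ ρ →₀ ℂ) →ₗ[ℂ] ℂ))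
            (Finsupp.single γ 1)) = w (mEquiv σ ρ γ) := by
      intro γ
      rw [LinearMap.sum_apply]
      have h2 : ∀ γ' : Itv (ρ * w0) (σ * w0),
          (w γ' • (Finsupp.lapply ((mEquiv σ ρ).symm γ') :
            (Itv σ ρ →₀ ℂ) →ₗ[ℂ] ℂ)) (Finsupp.single γ 1)
          = if γ' = mEquiv σ ρ γ then w γ' else 0 := by
        intro γ'
        rw [LinearMap.smul_apply, Finsupp.lapply_apply, Finsupp.single_apply]
        by_cases h : γ' = mEquiv σ ρ γ
        · rw [if_pos h, if_pos (by rw [h, Equiv.symm_apply_apply]), smul_eq_mul, mul_one]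
        · rw [if_neg h, if_neg (fun hc => h (by rw [hc, Equiv.apply_symm_apply])), smul_zero]
      rw [Finset.sum_congr rfl fun γ' _ => h2 γ', Finset.sum_ite_eq' Finset.univ,
        if_pos (Finset.mem_univ _)]
    rw [Finset.sum_congr rfl fun γ _ => by rw [this γ]]
    have h3 : ∀ γ : Itv σ ρ, w (mEquiv σ ρ γ) • Finsupp.single (mEquiv σ ρ γ) (1 : ℂ)
        = Finsupp.single (mEquiv σ ρ γ) (w (mEquiv σ ρ γ)) := by
      intro γ; rw [Finsupp.smul_single', mul_one]
    rw [Finset.sum_congr rfl fun γ _ => h3 γ,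
      Equiv.sum_comp (mEquiv σ ρ) (fun γ' => Finsupp.single γ' (w γ')), sum_single_univ]

section Intertwine

variable {n : ℕ} (σ ρ : SG n) (i : Fin n) (δ : Module.Dual ℂ (Itv σ ρ →₀ ℂ))

private noncomputable def Cfun (γ : Itv σ ρ) : Itv (ρ * w0) (σ * w0) →₀ ℂ :=
  if i ∈ DesL γ.1 then δ (Finsupp.single γ 1) • Finsupp.single (mEquiv σ ρ γ) 1 else 0

private noncomputable def Xfun (γ : Itv σ ρ) : Itv (ρ * w0) (σ * w0) →₀ ℂ :=
  if h : ¬(i ∈ DesL γ.1) ∧ (leL σ (sgen i * γ.1) ∧ leL (sgen i * γ.1) ρ) then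
    δ (Finsupp.single (⟨sgen i * γ.1, h.2⟩ : Itv σ ρ) 1) • Finsupp.single (mEquiv σ ρ γ) 1
  else 0

private noncomputable def Yfun (γ : Itv σ ρ) : Itv (ρ * w0) (σ * w0) →₀ ℂ :=
  if h : (i ∈ DesL γ.1) ∧ (leL σ (sgen i * γ.1) ∧ leL (sgen i * γ.1) ρ) then
    δ (Finsupp.single γ 1) • Finsupp.single (mEquiv σ ρ ⟨sgen i * γ.1, h.2⟩) 1
  else 0

lemma claimA (γ : Itv σ ρ) :
    δ (bpiFun σ ρ i γ) • Finsupp.single (mEquiv σ ρ γ) (1 : ℂ)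
      = Cfun σ ρ i δ γ + Xfun σ ρ i δ γ := by
  by_cases hd : i ∈ DesL γ.1
  · rw [bpiFun, if_pos hd, Cfun, if_pos hd, Xfun, dif_neg (fun hc => hc.1 hd), add_zero]
  · rw [bpiFun, if_neg hd, Cfun, if_neg hd, Xfun, zero_add]
    by_cases hq : leL σ (sgen i * γ.1) ∧ leL (sgen i * γ.1) ρ
    · rw [dif_pos hq, dif_pos ⟨hd, hq⟩]
    · rw [dif_neg hq, dif_neg (fun hc => hq hc.2), map_zero, zero_smul]

lemma claimB (γ : Itv σ ρ) :
    δ (Finsupp.single γ 1) • (Finsupp.single (mEquiv σ ρ γ) (1 : ℂ)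
        + bbarFun (ρ * w0) (σ * w0) i (mEquiv σ ρ γ))
      = Cfun σ ρ i δ γ + Yfun σ ρ i δ γ := by
  have hval : (mEquiv σ ρ γ).1 = γ.1 * w0 := rfl
  by_cases hd : i ∈ DesL γ.1
  · have hnd : ¬ i ∈ DesL (mEquiv σ ρ γ).1 := by
      rw [hval]
      exact fun hc => (desL_w0.mp hc) hd
    rw [bbarFun, if_neg hnd, Cfun, if_pos hd, Yfun]
    have hassoc : sgen i * (mEquiv σ ρ γ).1 = (sgen i * γ.1) * w0 := by
      rw [hval, mul_assoc]
    by_cases hq : leL σ (sgen i * γ.1) ∧ leL (sgen i * γ.1) ρ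
    · have hq' : leL (ρ * w0) (sgen i * (mEquiv σ ρ γ).1) ∧
          leL (sgen i * (mEquiv σ ρ γ).1) (σ * w0) := by
        rw [hassoc]
        exact itv_w0_iff.mp hq
      rw [dif_pos hq', dif_pos ⟨hd, hq⟩, smul_add]
      congr 2
    · have hq' : ¬ (leL (ρ * w0) (sgen i * (mEquiv σ ρ γ).1) ∧
          leL (sgen i * (mEquiv σ ρ γ).1) (σ * w0)) := by
        rw [hassoc]
        exact fun hc => hq (itv_w0_iff.mpr hc)
      rw [dif_neg hq', dif_neg (fun hc => hq hc.2), add_zero, add_zero]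
  · have hnd : i ∈ DesL (mEquiv σ ρ γ).1 := by
      rw [hval]
      exact desL_w0.mpr hd
    rw [bbarFun, if_pos hnd, Cfun, if_neg hd, Yfun, dif_neg (fun hc => hd hc.1),
      add_neg_cancel, smul_zero, add_zero]

lemma claimC : ∑ γ : Itv σ ρ, Xfun σ ρ i δ γ = ∑ γ : Itv σ ρ, Yfun σ ρ i δ γ := by
  classical
  set P := fun γ : Itv σ ρ => ¬(i ∈ DesL γ.1) ∧ (leL σ (sgen i * γ.1) ∧ leL (sgen i * γ.1) ρ)
    with hP
  set Q := fun γ : Itv σ ρ => (i ∈ DesL γ.1) ∧ (leL σ (sgen i * γ.1) ∧ leL (sgen i * γ.1) ρ)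
    with hQ
  have hx : ∑ γ : Itv σ ρ, Xfun σ ρ i δ γ = ∑ γ ∈ Finset.univ.filter P, Xfun σ ρ i δ γ :=
    (Finset.sum_subset (Finset.subset_univ _) (fun γ _ hγ => by
      rw [Xfun, dif_neg (fun hp => hγ (Finset.mem_filter.mpr ⟨Finset.mem_univ _, hp⟩))])).symm
  have hy : ∑ γ : Itv σ ρ, Yfun σ ρ i δ γ = ∑ γ ∈ Finset.univ.filter Q, Yfun σ ρ i δ γ :=
    (Finset.sum_subset (Finset.subset_univ _) (fun γ _ hγ => by
      rw [Yfun, dif_neg (fun hp => hγ (Finset.mem_filter.mpr ⟨Finset.mem_univ _, hp⟩))])).symm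
  rw [hx, hy]
  refine Finset.sum_bij' (i := fun γ hγ => (⟨sgen i * γ.1,
      ((Finset.mem_filter.mp hγ).2).2⟩ : Itv σ ρ))
    (j := fun γ hγ => (⟨sgen i * γ.1, ((Finset.mem_filter.mp hγ).2).2⟩ : Itv σ ρ))
    ?_ ?_ ?_ ?_ ?_
  · intro γ hγ
    obtain ⟨hnd, hq⟩ := (Finset.mem_filter.mp hγ).2
    refine Finset.mem_filter.mpr ⟨Finset.mem_univ _, desL_sgen.mpr hnd, ?_⟩
    show leL σ (sgen i * (sgen i * γ.1)) ∧ leL (sgen i * (sgen i * γ.1)) ρ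
    rw [sgen_mul_sgen_mul]
    exact γ.2
  · intro γ hγ
    obtain ⟨hd, hq⟩ := (Finset.mem_filter.mp hγ).2
    refine Finset.mem_filter.mpr ⟨Finset.mem_univ _, fun hc => (desL_sgen.mp hc) hd, ?_⟩
    show leL σ (sgen i * (sgen i * γ.1)) ∧ leL (sgen i * (sgen i * γ.1)) ρ
    rw [sgen_mul_sgen_mul]
    exact γ.2
  · intro γ hγ
    exact Subtype.ext (sgen_mul_sgen_mul i γ.1)
  · intro γ hγ
    exact Subtype.ext (sgen_mul_sgen_mul i γ.1)
  · intro γ hγ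
    obtain ⟨hnd, hq⟩ := (Finset.mem_filter.mp hγ).2
    rw [Xfun, dif_pos ⟨hnd, hq⟩, Yfun]
    have hq2 : (i ∈ DesL (sgen i * γ.1)) ∧
        (leL σ (sgen i * (sgen i * γ.1)) ∧ leL (sgen i * (sgen i * γ.1)) ρ) := by
      rw [sgen_mul_sgen_mul]
      exact ⟨desL_sgen.mpr hnd, γ.2⟩
    rw [dif_pos hq2]
    congr 2
    exact congrArg _ ((Subtype.ext (sgen_mul_sgen_mul i γ.1)).symm)

end Intertwine

/-- `γ* ↦ γw₀` is an isomorphism of `H_n(0)`-modules `χ[B(σ,ρ)] ≅ B̄(ρw₀, σw₀)`: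
it is bijective and intertwines the `χ`-twisted action on the dual space (where `π_i` acts
by precomposition with the action of `π_i` on `B(σ,ρ)`) with the action on `B̄(ρw₀,σw₀)`
(where `π_i = 1 + π̄_i` acts by `w ↦ w + π̄_i ⋆ w`). -/
theorem stmt18 (n : ℕ) (σ ρ : SG n) :
    Function.Bijective (chiF σ ρ) ∧
    ∀ (i : Fin n) (δ : Module.Dual ℂ (Itv σ ρ →₀ ℂ)),
      chiF σ ρ ((bpi σ ρ i).dualMap δ) =
        chiF σ ρ δ + bbar (ρ * w0) (σ * w0) i (chiF σ ρ δ) := by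
  refine ⟨chiF_bijective σ ρ, ?_⟩
  intro i δ
  rw [chiF_apply, chiF_apply]
  have hb : bbar (ρ * w0) (σ * w0) i
      (∑ γ : Itv σ ρ, δ (Finsupp.single γ 1) • Finsupp.single (mEquiv σ ρ γ) (1 : ℂ))
      = ∑ γ : Itv σ ρ, δ (Finsupp.single γ 1) • bbarFun (ρ * w0) (σ * w0) i (mEquiv σ ρ γ) := by
    rw [map_sum]
    exact Finset.sum_congr rfl fun γ _ => by rw [map_smul, bbar_single]
  rw [hb, ← Finset.sum_add_distrib]
  have lhs : ∀ γ : Itv σ ρ, ((bpi σ ρ i).dualMap δ) (Finsupp.single γ 1) •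
      Finsupp.single (mEquiv σ ρ γ) (1 : ℂ)
      = δ (bpiFun σ ρ i γ) • Finsupp.single (mEquiv σ ρ γ) (1 : ℂ) := by
    intro γ
    rw [LinearMap.dualMap_apply, bpi_single]
  have rhs : ∀ γ : Itv σ ρ,
      δ (Finsupp.single γ 1) • Finsupp.single (mEquiv σ ρ γ) (1 : ℂ)
        + δ (Finsupp.single γ 1) • bbarFun (ρ * w0) (σ * w0) i (mEquiv σ ρ γ)
      = δ (Finsupp.single γ 1) • (Finsupp.single (mEquiv σ ρ γ) (1 : ℂ)
        + bbarFun (ρ * w0) (σ * w0) i (mEquiv σ ρ γ)) := by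
    intro γ
    rw [smul_add]
  calc ∑ γ : Itv σ ρ, ((bpi σ ρ i).dualMap δ) (Finsupp.single γ 1) •
        Finsupp.single (mEquiv σ ρ γ) (1 : ℂ)
      = ∑ γ : Itv σ ρ, δ (bpiFun σ ρ i γ) • Finsupp.single (mEquiv σ ρ γ) (1 : ℂ) :=
        Finset.sum_congr rfl fun γ _ => lhs γ
    _ = ∑ γ : Itv σ ρ, (Cfun σ ρ i δ γ + Xfun σ ρ i δ γ) :=
        Finset.sum_congr rfl fun γ _ => claimA σ ρ i δ γ
    _ = (∑ γ : Itv σ ρ, Cfun σ ρ i δ γ) + ∑ γ : Itv σ ρ, Xfun σ ρ i δ γ :=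
        Finset.sum_add_distrib
    _ = (∑ γ : Itv σ ρ, Cfun σ ρ i δ γ) + ∑ γ : Itv σ ρ, Yfun σ ρ i δ γ := by
        rw [claimC]
    _ = ∑ γ : Itv σ ρ, (Cfun σ ρ i δ γ + Yfun σ ρ i δ γ) := Finset.sum_add_distrib.symm
    _ = ∑ γ : Itv σ ρ, δ (Finsupp.single γ 1) • (Finsupp.single (mEquiv σ ρ γ) (1 : ℂ)
        + bbarFun (ρ * w0) (σ * w0) i (mEquiv σ ρ γ)) :=
        Finset.sum_congr rfl fun γ _ => (claimB σ ρ i δ γ).symm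
    _ = ∑ γ : Itv σ ρ, (δ (Finsupp.single γ 1) • Finsupp.single (mEquiv σ ρ γ) (1 : ℂ)
        + δ (Finsupp.single γ 1) • bbarFun (ρ * w0) (σ * w0) i (mEquiv σ ρ γ)) :=
        Finset.sum_congr rfl fun γ _ => (rhs γ).symm

end
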